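/- Let Z be a real-valued random variable with finite mean m and finite variance σ². Then E[max{0, Z}] ≤ (√(σ² + m²) + m)/2. -/

import Mathlib

open MeasureTheory ProbabilityTheory

/-- Gallego–Moon bound: for a square-integrable random variable `Z` with mean `m`
and variance `σ²`, `E[max{0,Z}] ≤ (√(σ² + m²) + m)/2`. -/
theorem gallego_moon_bound {Ω : Type*} [MeasurableSpace Ω]
    (μ : Measure Ω) [IsProbabilityMeasure μ]
    (Z : Ω → ℝ) (hZ : MemLp Z 2 μ) (m : ℝ) (hm : ∫ ω, Z ω ∂μ = m) :
    ∫ ω, max 0 (Z ω) ∂μ ≤ (Real.sqrt (variance Z μ + m ^ 2) + m) / 2 := by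
  have hZ1 : Integrable Z μ := hZ.integrable one_le_two
  have habsm : MemLp (fun ω => |Z ω|) 2 μ := hZ.abs
  have habs1 : Integrable (fun ω => |Z ω|) μ := hZ1.abs
  -- key: E[Z^2] = var + m^2
  have hvar : variance Z μ = (∫ ω, Z ω ^ 2 ∂μ) - m ^ 2 := by
    rw [variance_eq_sub hZ, hm]; rfl
  have hsq : ∫ ω, Z ω ^ 2 ∂μ = variance Z μ + m ^ 2 := by linarith
  -- E|Z| ≤ √E[Z^2]
  have habsvar : variance (fun ω => |Z ω|) μ
      = (∫ ω, Z ω ^ 2 ∂μ) - (∫ ω, |Z ω| ∂μ) ^ 2 := by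
    rw [variance_eq_sub habsm]
    congr 1
    exact integral_congr_ae (Filter.Eventually.of_forall fun ω => by simp [sq_abs])
  have hnn := variance_nonneg (fun ω => |Z ω|) μ
  have hEabs_sq : (∫ ω, |Z ω| ∂μ) ^ 2 ≤ variance Z μ + m ^ 2 := by
    rw [← hsq]; linarith [habsvar ▸ hnn]
  have hEabs_nonneg : 0 ≤ ∫ ω, |Z ω| ∂μ :=
    integral_nonneg fun ω => abs_nonneg _
  have hEabs : ∫ ω, |Z ω| ∂μ ≤ Real.sqrt (variance Z μ + m ^ 2) := by
    have := Real.sqrt_le_sqrt hEabs_sq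
    rwa [Real.sqrt_sq hEabs_nonneg] at this
  -- E max 0 Z = (m + E|Z|)/2
  have hmax : ∫ ω, max 0 (Z ω) ∂μ = ((∫ ω, Z ω ∂μ) + ∫ ω, |Z ω| ∂μ) / 2 := by
    rw [← integral_add hZ1 habs1, ← integral_div]
    exact integral_congr_ae (Filter.Eventually.of_forall fun ω => by
      show max 0 (Z ω) = (Z ω + |Z ω|) / 2
      rcases le_or_gt 0 (Z ω) with h | h
      · rw [max_eq_right h, abs_of_nonneg h]; ring
      · rw [max_eq_left h.le, abs_of_neg h]; ring)
  rw [hmax, hm]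
  linarith
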